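/- Fix r ≥ 1 and suppose Ψ/V ≥ 2 where Ψ, V > 0. Then the equation s(1+s^r)² = (Ψ/V)(1+(1+r)s^r) has a unique solution s* in (1, ∞), and no solution in (0,1]. -/

import Mathlib

open Real Set

lemma phi_strictMono (r : ℝ) (hr : 1 ≤ r) :
    StrictMonoOn (fun s : ℝ => s * (1 + s ^ r) ^ 2 / (1 + (1 + r) * s ^ r)) (Ici 1) := by
  have hv : ∀ x : ℝ, x ∈ Ici (1:ℝ) → (0:ℝ) < 1 + (1 + r) * x ^ r := by
    intro x hx
    have hx0 : (0:ℝ) < x := lt_of_lt_of_le one_pos hx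
    have : 0 < x ^ r := Real.rpow_pos_of_pos hx0 r
    nlinarith
  have hcr : ContinuousOn (fun s : ℝ => s ^ r) (Ici 1) :=
    continuousOn_id.rpow_const (fun x hx => Or.inl (ne_of_gt (lt_of_lt_of_le one_pos hx)))
  apply strictMonoOn_of_deriv_pos (convex_Ici 1)
  · apply ContinuousOn.div
    · exact continuousOn_id.mul ((continuousOn_const.add hcr).pow 2)
    · exact continuousOn_const.add (continuousOn_const.mul hcr)
    · intro x hx; exact (hv x hx).ne'
  · intro x hx
    rw [interior_Ici] at hx
    have hx1 : (1:ℝ) < x := hx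
    have hx0 : (0:ℝ) < x := lt_trans one_pos hx1
    have ha1 : (1:ℝ) ≤ x ^ r := Real.one_le_rpow hx1.le (le_trans zero_le_one hr)
    have hp : HasDerivAt (fun s : ℝ => s ^ r) (r * x ^ (r-1)) x :=
      Real.hasDerivAt_rpow_const (Or.inl hx0.ne')
    have hu : HasDerivAt (fun s : ℝ => s * (1 + s ^ r) ^ 2)
        (1 * (1 + x ^ r) ^ 2 + x * (2 * (1 + x ^ r) ^ 1 * (r * x ^ (r-1)))) x :=
      (hasDerivAt_id x).mul ((hp.const_add 1).pow 2)
    have hw : HasDerivAt (fun s : ℝ => 1 + (1 + r) * s ^ r)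
        ((1 + r) * (r * x ^ (r-1))) x := (hp.const_mul (1+r)).const_add 1
    have hvx : (0:ℝ) < 1 + (1 + r) * x ^ r := hv x (le_of_lt hx1)
    have hq := hu.div hw hvx.ne'
    rw [show (fun s : ℝ => s * (1 + s ^ r) ^ 2 / (1 + (1 + r) * s ^ r)) = ((fun s : ℝ => s * (1 + s ^ r) ^ 2) / fun s : ℝ => 1 + (1 + r) * s ^ r) from rfl, hq.deriv]
    apply div_pos _ (by positivity)
    have hb : x * x ^ (r-1) = x ^ r := by
      nth_rewrite 1 [← Real.rpow_one x]
      rw [← Real.rpow_add hx0]; ring_nf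
    set a := x ^ r with hadef
    set b := x ^ (r-1) with hbdef
    have hN : (1 * (1 + a) ^ 2 + x * (2 * (1 + a) ^ 1 * (r * b))) * (1 + (1 + r) * a)
        - x * (1 + a) ^ 2 * ((1 + r) * (r * b))
        = (1 + a) * (1 + (2 + 2*r - r^2)*a + (1+r)^2*a^2) := by
      linear_combination (2*r*(1+a)*(1+(1+r)*a) - r*(1+r)*(1+a)^2) * hb
    rw [hN]
    have h2 : (0:ℝ) < 1 + (2 + 2*r - r^2)*a + (1+r)^2*a^2 := by
      nlinarith [mul_nonneg (mul_nonneg (sq_nonneg (1+r)) (by linarith : (0:ℝ) ≤ a))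
        (by linarith : (0:ℝ) ≤ a - 1)]
    nlinarith

theorem unique_equilibrium_ratio (r Ψ V : ℝ) (hr : 1 ≤ r) (hV : 0 < V)
    (hΨ : 2 * V ≤ Ψ) :
    (∃! s : ℝ, 1 < s ∧
        s * (1 + s ^ r) ^ 2 = (Ψ / V) * (1 + (1 + r) * s ^ r)) ∧
    (∀ s : ℝ, 0 < s → s ≤ 1 →
        s * (1 + s ^ r) ^ 2 ≠ (Ψ / V) * (1 + (1 + r) * s ^ r)) := by
  set c := Ψ / V with hcdef
  have hc : 2 ≤ c := (le_div_iff₀ hV).2 (by linarith)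
  have hv : ∀ x : ℝ, 0 < x → (0:ℝ) < 1 + (1 + r) * x ^ r := by
    intro x hx
    have : 0 < x ^ r := Real.rpow_pos_of_pos hx r
    nlinarith
  set φ := fun s : ℝ => s * (1 + s ^ r) ^ 2 / (1 + (1 + r) * s ^ r) with hφ
  have hmono := phi_strictMono r hr
  have hkey : ∀ s : ℝ, 0 < s →
      (s * (1 + s ^ r) ^ 2 = c * (1 + (1 + r) * s ^ r) ↔ φ s = c) := by
    intro s hs
    rw [hφ]
    simp only []
    rw [div_eq_iff (hv s hs).ne']
  constructor
  · -- existence and uniqueness on (1,∞)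
    have hφ1 : φ 1 = 4 / (2 + r) := by
      simp only [hφ, Real.one_rpow]
      norm_num
      ring_nf
    have hφ1lt : φ 1 < c := by
      rw [hφ1]
      have : 4 / (2 + r) ≤ 4 / 3 := by
        apply div_le_div_of_nonneg_left (by norm_num) (by norm_num) (by linarith)
      linarith
    set M := c * (2 + r) with hM
    have hM1 : (1:ℝ) ≤ M := by nlinarith
    have hA1 : (1:ℝ) ≤ M ^ r := Real.one_le_rpow hM1 (by linarith)
    have hφM : c ≤ φ M := by
      rw [hφ]
      simp only []
      rw [le_div_iff₀ (hv M (by linarith))]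
      set A := M ^ r
      have hexp : M * (1 + A) ^ 2 - c * (1 + (1 + r) * A)
          = c * ((1 + r) + (3 + r) * A + (2 + r) * A ^ 2) := by rw [hM]; ring
      nlinarith [mul_pos (by linarith : (0:ℝ) < c)
        (by nlinarith : (0:ℝ) < (1 + r) + (3 + r) * A + (2 + r) * A ^ 2)]
    have hcont : ContinuousOn φ (Icc 1 M) := by
      apply ContinuousOn.mono _ (Icc_subset_Ici_self)
      have hcr : ContinuousOn (fun s : ℝ => s ^ r) (Ici 1) :=
        continuousOn_id.rpow_const (fun x hx => Or.inl (ne_of_gt (lt_of_lt_of_le one_pos hx)))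
      apply ContinuousOn.div
      · exact continuousOn_id.mul ((continuousOn_const.add hcr).pow 2)
      · exact continuousOn_const.add (continuousOn_const.mul hcr)
      · intro x hx; exact (hv x (lt_of_lt_of_le one_pos hx)).ne'
    obtain ⟨s, hsmem, hseq⟩ := intermediate_value_Icc hM1 hcont ⟨hφ1lt.le, hφM⟩
    have hs1 : 1 < s := by
      rcases eq_or_lt_of_le hsmem.1 with h | h
      · exfalso; rw [← h] at hseq; exact hφ1lt.ne hseq
      · exact h
    refine ⟨s, ⟨hs1, ?_⟩, ?_⟩
    · exact (hkey s (by linarith)).2 hseq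
    · rintro t ⟨ht1, hteq⟩
      have htφ : φ t = c := (hkey t (by linarith)).1 hteq
      exact hmono.injOn (Set.mem_Ici.2 ht1.le) (Set.mem_Ici.2 hs1.le)
        (show φ t = φ s by rw [htφ, hseq])
  · -- no solution in (0,1]
    intro s hs0 hs1 heq
    have ha1 : s ^ r ≤ 1 := Real.rpow_le_one hs0.le hs1 (by linarith)
    have ha0 : 0 < s ^ r := Real.rpow_pos_of_pos hs0 r
    set a := s ^ r
    have h1 : s * (1 + a) ^ 2 ≤ (1 + a) ^ 2 := by nlinarith [sq_nonneg (1 + a)]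
    have h2 : (1 + a) ^ 2 < 2 * (1 + (1 + r) * a) := by nlinarith
    have h3 : 2 * (1 + (1 + r) * a) ≤ c * (1 + (1 + r) * a) := by
      have := hv s hs0
      nlinarith
    linarith [heq.ge, heq.le]
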